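/- With W_r = ∫_{1/r}^∞ x^{1−r}/(1+x)^{r+1} dx for r ∈ (1/2, 1), one has liminf_{r → (1/2)^+} (2r − 1)·W_r ≥ 1. -/
import Mathlib

open Set Filter MeasureTheory Real

namespace Stmt9Aux

lemma cont_on {r : ℝ} (hr : r ∈ Set.Ioo (1/2 : ℝ) 1) :
    ContinuousOn (fun x : ℝ => x ^ (1 - r) / (1 + x) ^ (r + 1)) (Ioi (1/r)) := by
  have hc : (0:ℝ) < 1/r := by
    have : (0:ℝ) < r := by linarith [hr.1]
    positivity
  apply ContinuousOn.div
  · exact continuousOn_id.rpow_const (fun x hx => Or.inl (ne_of_gt (hc.trans hx)))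
  · exact (continuousOn_const.add continuousOn_id).rpow_const
      (fun x hx => Or.inr (by linarith [hr.1]))
  · intro x hx
    have hx0 : (0:ℝ) < x := hc.trans hx
    positivity

lemma bound_above {r : ℝ} (hr : r ∈ Set.Ioo (1/2 : ℝ) 1) {x : ℝ} (hx : 1/r < x) :
    x ^ (1 - r) / (1 + x) ^ (r + 1) ≤ x ^ (-(2*r)) := by
  have hr0 : (0:ℝ) < r := by linarith [hr.1]
  have hx0 : (0:ℝ) < x := lt_trans (by positivity) hx
  have h1 : x ^ (r+1) ≤ (1+x) ^ (r+1) :=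
    Real.rpow_le_rpow hx0.le (by linarith) (by linarith)
  calc x ^ (1 - r) / (1 + x) ^ (r + 1) ≤ x ^ (1 - r) / x ^ (r + 1) := by
        apply div_le_div_of_nonneg_left (by positivity) (by positivity) h1
    _ = x ^ (-(2*r)) := by
        rw [← Real.rpow_sub hx0]; ring_nf

lemma integrable_on {r : ℝ} (hr : r ∈ Set.Ioo (1/2 : ℝ) 1) :
    IntegrableOn (fun x : ℝ => x ^ (1 - r) / (1 + x) ^ (r + 1)) (Ioi (1/r)) := by
  have hr0 : (0:ℝ) < r := by linarith [hr.1]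
  have hc : (0:ℝ) < 1/r := by positivity
  have hint : IntegrableOn (fun x : ℝ => x ^ (-(2*r))) (Ioi (1/r)) :=
    integrableOn_Ioi_rpow_of_lt (by linarith [hr.1]) hc
  refine hint.mono' ((cont_on hr).aestronglyMeasurable measurableSet_Ioi) ?_
  rw [ae_restrict_iff' measurableSet_Ioi]
  filter_upwards with x hx
  have hx0 : (0:ℝ) < x := hc.trans hx
  rw [Real.norm_of_nonneg (by positivity)]
  exact bound_above hr hx

end Stmt9Aux

namespace Stmt9Aux

lemma lower {A r : ℝ} (hA : 2 ≤ A) (hr : r ∈ Set.Ioo (1/2 : ℝ) 1) :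
    (1 + 1/A) ^ (-(r+1)) * A ^ (1 - 2*r) ≤
      (2*r - 1) * ∫ x in Ioi (1/r), x ^ (1-r) / (1+x) ^ (r+1) := by
  have hr0 : (0:ℝ) < r := by linarith [hr.1]
  have hc : (0:ℝ) < 1/r := by positivity
  have hcA : 1/r < A := by
    have : 1/r < 2 := by rw [div_lt_iff₀ hr0]; linarith [hr.1]
    linarith
  have hA0 : (0:ℝ) < A := by linarith
  have hB0 : (0:ℝ) < 1 + 1/A := by positivity
  set c := (1 + 1/A) ^ (-(r+1)) with hcdef
  have hcpos : 0 < c := Real.rpow_pos_of_pos hB0 _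
  -- step: lower bound integrand on Ioi A
  have key : ∀ x ∈ Ioi A, c * x ^ (-(2*r)) ≤ x ^ (1-r) / (1+x) ^ (r+1) := by
    intro x hx
    have hx0 : (0:ℝ) < x := hA0.trans hx
    have h1 : 1 + x ≤ (1 + 1/A) * x := by
      have : 1 ≤ x / A := (one_le_div hA0).mpr (le_of_lt hx)
      have : 1 ≤ x * (1/A) := by rw [mul_one_div]; exact this
      nlinarith
    have h2 : (1+x) ^ (r+1) ≤ (1 + 1/A) ^ (r+1) * x ^ (r+1) := by
      rw [← Real.mul_rpow hB0.le hx0.le]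
      exact Real.rpow_le_rpow (by linarith) h1 (by linarith)
    have h3 : x ^ (1-r) / ((1 + 1/A) ^ (r+1) * x ^ (r+1)) ≤ x ^ (1-r) / (1+x) ^ (r+1) :=
      div_le_div_of_nonneg_left (by positivity) (by positivity) h2
    refine le_trans (le_of_eq ?_) h3
    rw [hcdef, Real.rpow_neg hB0.le,
      show -(2*r) = (1-r) - (r+1) by ring, Real.rpow_sub hx0]
    have hb : (0:ℝ) < (1 + 1/A) ^ (r+1) := Real.rpow_pos_of_pos hB0 _
    have hxr : (0:ℝ) < x ^ (r+1) := Real.rpow_pos_of_pos hx0 _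
    field_simp
  have hint2 : IntegrableOn (fun x : ℝ => c * x ^ (-(2*r))) (Ioi A) :=
    (integrableOn_Ioi_rpow_of_lt (by linarith [hr.1]) hA0).smul c
  have hintf : IntegrableOn (fun x : ℝ => x ^ (1-r) / (1+x) ^ (r+1)) (Ioi (1/r)) :=
    integrable_on hr
  have step1 : ∫ x in Ioi A, c * x ^ (-(2*r)) ≤ ∫ x in Ioi A, x ^ (1-r) / (1+x) ^ (r+1) := by
    refine setIntegral_mono_on hint2 (hintf.mono (Ioi_subset_Ioi hcA.le) le_rfl)
      measurableSet_Ioi key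
  have step2 : ∫ x in Ioi A, x ^ (1-r) / (1+x) ^ (r+1)
      ≤ ∫ x in Ioi (1/r), x ^ (1-r) / (1+x) ^ (r+1) := by
    refine setIntegral_mono_set hintf ?_ (HasSubset.Subset.eventuallyLE (Ioi_subset_Ioi hcA.le))
    rw [EventuallyLE, ae_restrict_iff' measurableSet_Ioi]
    filter_upwards with x hx
    have hx0 : (0:ℝ) < x := hc.trans hx
    positivity
  have step3 : ∫ x in Ioi A, c * x ^ (-(2*r)) = c * (A ^ (1 - 2*r) / (2*r - 1)) := by
    rw [integral_const_mul, integral_Ioi_rpow_of_lt (by linarith [hr.1]) hA0]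
    rw [show -(2*r) + 1 = 1 - 2*r by ring,
      show (2*r-1 : ℝ) = -(1-2*r) by ring, div_neg, neg_div]
  have : c * (A ^ (1 - 2*r) / (2*r - 1)) ≤ ∫ x in Ioi (1/r), x ^ (1-r) / (1+x) ^ (r+1) := by
    rw [← step3]; exact step1.trans step2
  have hpos : (0:ℝ) < 2*r - 1 := by linarith [hr.1]
  calc c * A ^ (1 - 2*r) = (2*r-1) * (c * (A ^ (1 - 2*r) / (2*r - 1))) := by
        field_simp
    _ ≤ (2*r-1) * ∫ x in Ioi (1/r), x ^ (1-r) / (1+x) ^ (r+1) := by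
        exact mul_le_mul_of_nonneg_left this hpos.le

end Stmt9Aux

namespace Stmt9Aux

lemma upper {r : ℝ} (hr : r ∈ Set.Ioo (1/2 : ℝ) 1) :
    (2*r - 1) * (∫ x in Ioi (1/r), x ^ (1-r) / (1+x) ^ (r+1)) ≤ 1 := by
  have hr0 : (0:ℝ) < r := by linarith [hr.1]
  have hc : (0:ℝ) < 1/r := by positivity
  have hint : IntegrableOn (fun x : ℝ => x ^ (-(2*r))) (Ioi (1/r)) :=
    integrableOn_Ioi_rpow_of_lt (by linarith [hr.1]) hc
  have h1 : (∫ x in Ioi (1/r), x ^ (1-r) / (1+x) ^ (r+1)) ≤ ∫ x in Ioi (1/r), x ^ (-(2*r)) :=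
    setIntegral_mono_on (integrable_on hr) hint measurableSet_Ioi
      (fun x hx => bound_above hr hx)
  have h2 : (∫ x in Ioi (1/r), x ^ (-(2*r))) = (1/r) ^ (1 - 2*r) / (2*r - 1) := by
    rw [integral_Ioi_rpow_of_lt (by linarith [hr.1]) hc,
      show -(2*r) + 1 = 1 - 2*r by ring,
      show (2*r-1 : ℝ) = -(1-2*r) by ring, div_neg, neg_div]
  have h3 : (1/r : ℝ) ^ (1 - 2*r) ≤ 1 :=
    Real.rpow_le_one_of_one_le_of_nonpos (by rw [le_div_iff₀ hr0]; linarith [hr.2])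
      (by linarith [hr.1])
  have hpos : (0:ℝ) < 2*r - 1 := by linarith [hr.1]
  calc (2*r - 1) * (∫ x in Ioi (1/r), x ^ (1-r) / (1+x) ^ (r+1))
      ≤ (2*r - 1) * ((1/r) ^ (1 - 2*r) / (2*r - 1)) := by
        rw [← h2]; exact mul_le_mul_of_nonneg_left h1 hpos.le
    _ = (1/r) ^ (1 - 2*r) := by field_simp
    _ ≤ 1 := h3

lemma tend {A : ℝ} (hA : 2 ≤ A) :
    Tendsto (fun r : ℝ => (1 + 1/A) ^ (-(r+1)) * A ^ (1 - 2*r))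
      (nhdsWithin (1/2 : ℝ) (Ioi (1/2))) (nhds ((1 + 1/A) ^ (-(3/2) : ℝ))) := by
  have hA0 : (0:ℝ) < A := by linarith
  have hB0 : (0:ℝ) < 1 + 1/A := by positivity
  have t1 : Tendsto (fun r : ℝ => -(r+1)) (nhdsWithin (1/2 : ℝ) (Ioi (1/2)))
      (nhds (-(3/2) : ℝ)) := by
    have : Tendsto (fun r : ℝ => -(r+1)) (nhds (1/2 : ℝ)) (nhds (-(1/2+1 : ℝ))) :=
      ((continuous_id.add continuous_const).neg).tendsto _
    refine (this.mono_left nhdsWithin_le_nhds).congr' (by rfl) |>.mono_right ?_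
    norm_num
  have t2 : Tendsto (fun r : ℝ => 1 - 2*r) (nhdsWithin (1/2 : ℝ) (Ioi (1/2)))
      (nhds (0 : ℝ)) := by
    have : Tendsto (fun r : ℝ => 1 - 2*r) (nhds (1/2 : ℝ)) (nhds (1 - 2*(1/2) : ℝ)) :=
      (continuous_const.sub (continuous_const.mul continuous_id)).tendsto _
    simpa using this.mono_left nhdsWithin_le_nhds
  have t1' := (tendsto_const_nhds.rpow t1 (Or.inl hB0.ne') :
    Tendsto (fun r : ℝ => (1 + 1/A) ^ (-(r+1))) _ (nhds ((1 + 1/A) ^ (-(3/2) : ℝ))))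
  have t2' := (tendsto_const_nhds.rpow t2 (Or.inl hA0.ne') :
    Tendsto (fun r : ℝ => A ^ (1 - 2*r)) _ (nhds (A ^ (0:ℝ))))
  rw [Real.rpow_zero] at t2'
  simpa using t1'.mul t2'

end Stmt9Aux

/-- From the proof of Corollary 2.3: with W_r = ∫_{1/r}^∞ x^{1−r}/(1+x)^{r+1} dx,
liminf_{r → (1/2)^+} (2r − 1)·W_r ≥ 1. -/
theorem stmt_9 :
    (1 : ℝ) ≤ Filter.liminf
      (fun r : ℝ => (2 * r - 1) *
        ∫ x in Set.Ioi (1 / r), x ^ (1 - r) / (1 + x) ^ (r + 1))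
      (nhdsWithin (1 / 2 : ℝ) (Set.Ioi (1 / 2))) := by
  set u : ℝ → ℝ := fun r =>
    (2 * r - 1) * ∫ x in Set.Ioi (1 / r), x ^ (1 - r) / (1 + x) ^ (r + 1) with hu
  set l := nhdsWithin (1 / 2 : ℝ) (Set.Ioi (1 / 2)) with hl
  have hmem : Set.Ioo (1/2 : ℝ) 1 ∈ l := Ioo_mem_nhdsGT_of_mem (by norm_num)
  have hub : ∀ᶠ r in l, u r ≤ 1 := by
    filter_upwards [hmem] with r hr using Stmt9Aux.upper hr
  have hcb : IsCoboundedUnder (· ≥ ·) l u :=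
    Filter.IsBoundedUnder.isCoboundedUnder_ge ⟨1, hub⟩
  refine le_of_forall_lt_imp_le_of_dense fun c hc => ?_
  have htail : Tendsto (fun A : ℝ => (1 + 1/A) ^ (-(3/2) : ℝ)) atTop (nhds (1 : ℝ)) := by
    have hb : Tendsto (fun A : ℝ => 1 + 1/A) atTop (nhds (1 : ℝ)) := by
      simpa using (tendsto_const_nhds.add
        (tendsto_const_nhds.div_atTop tendsto_id) :
        Tendsto (fun A : ℝ => 1 + 1/A) atTop (nhds ((1:ℝ) + 0)))
    simpa using hb.rpow tendsto_const_nhds (Or.inl one_ne_zero)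
  obtain ⟨A, hcA, hA2⟩ :=
    ((htail.eventually (eventually_gt_nhds hc)).and (eventually_ge_atTop (2:ℝ))).exists
  have hev : ∀ᶠ r in l, c ≤ u r := by
    have h1 := (Stmt9Aux.tend hA2).eventually (eventually_ge_nhds hcA)
    filter_upwards [h1, hmem] with r h1 h2 using h1.trans (Stmt9Aux.lower hA2 h2)
  exact Filter.le_liminf_of_le hcb hev
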